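/- Consider the convex optimization problem of the previous context with W ≥ 1/(2M+1): minimize f = M·μ + M·σ + (2M+1)·θ + ν/W − 2M subject to (1−μ)^+ + (1−σ)^+ + (1−θ)^+ + (Wα_S − ν)^+ ≤ r, μ,σ,θ,ν ≥ 0, μ+θ ≥ 1, σ+θ ≥ 1. Then the minimum value equals 2M+1+α_S − (2M+1)·r for 0 ≤ r ≤ 1, and α_S + (1−r)/W for 1 ≤ r ≤ 1 + W·α_S. -/

import Mathlib

/-- Feasible objective values of the sum-rate diversity-order LP for the
`(M,1,1,M)` side-channel assisted full-duplex network. -/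
def sumDivSet (M : ℕ) (W αS r : ℝ) : Set ℝ :=
  {y : ℝ | ∃ μ σ θ ν : ℝ, 0 ≤ μ ∧ 0 ≤ σ ∧ 0 ≤ θ ∧ 0 ≤ ν ∧
    1 ≤ μ + θ ∧ 1 ≤ σ + θ ∧
    max (1 - μ) 0 + max (1 - σ) 0 + max (1 - θ) 0 + max (W * αS - ν) 0 ≤ r ∧
    y = (M : ℝ) * μ + (M : ℝ) * σ + (2 * (M : ℝ) + 1) * θ + ν / W - 2 * (M : ℝ)}

set_option maxHeartbeats 1600000 in
/-- When `W ≥ 1/(2M+1)`, the minimum of the sum diversity-order LP equals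
`2M+1+αS − (2M+1)·r` for `0 ≤ r ≤ 1`, and `αS + (1−r)/W` for `1 ≤ r ≤ 1 + W·αS`. -/
theorem sum_diversity_lp_large_W (M : ℕ) (hM : 1 ≤ M) (W αS : ℝ)
    (hW : 0 < W) (hS : 0 < αS)
    (hWge : 1 / (2 * (M : ℝ) + 1) ≤ W) :
    (∀ r : ℝ, 0 ≤ r → r ≤ 1 →
      IsLeast (sumDivSet M W αS r)
        (2 * (M : ℝ) + 1 + αS - (2 * (M : ℝ) + 1) * r)) ∧
    (∀ r : ℝ, 1 ≤ r → r ≤ 1 + W * αS →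
      IsLeast (sumDivSet M W αS r) (αS + (1 - r) / W)) := by
  have hW' : W ≠ 0 := ne_of_gt hW
  have hM1 : (1:ℝ) ≤ (M:ℝ) := by exact_mod_cast hM
  have hMW : (1:ℝ) ≤ (2*(M:ℝ)+1) * W := by
    rw [div_le_iff₀ (by linarith)] at hWge; linarith
  constructor
  · intro r hr0 hr1
    constructor
    · refine ⟨1, 1, 1-r, W*αS, by norm_num, by norm_num, by linarith, by positivity,
        by linarith, by linarith, ?_, ?_⟩
      · have : max (1-(1:ℝ)) 0 = 0 := by norm_num
        rw [this]
        have h2 : max (1 - (1 - r)) 0 = r := by rw [max_eq_left (by linarith)]; ring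
        have h3 : max (W*αS - W*αS) 0 = 0 := by simp
        rw [h2, h3]; linarith
      · field_simp; ring
    · rintro y ⟨μ, σ, θ, ν, hμ, hσ, hθ, hν, hμθ, hσθ, hbud, hy⟩
      set a := max (1-μ) 0 with ha
      set b := max (1-σ) 0 with hb
      set c := max (1-θ) 0 with hc
      set d := max (W*αS - ν) 0 with hd
      have ha1 : 1 - μ ≤ a := le_max_left _ _
      have ha0 : 0 ≤ a := le_max_right _ _
      have hb1 : 1 - σ ≤ b := le_max_left _ _
      have hb0 : 0 ≤ b := le_max_right _ _
      have hc1 : 1 - θ ≤ c := le_max_left _ _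
      have hc0 : 0 ≤ c := le_max_right _ _
      have hd1 : W*αS - ν ≤ d := le_max_left _ _
      have hd0 : 0 ≤ d := le_max_right _ _
      have htW : ν / W * W = ν := div_mul_cancel₀ ν hW'
      have hMW0 : (0:ℝ) ≤ (M:ℝ)*W := by positivity
      have key : W * (2 * (M:ℝ) + 1 + αS - (2 * (M:ℝ) + 1) * r) ≤
          W * ((M : ℝ) * μ + (M : ℝ) * σ + (2 * (M : ℝ) + 1) * θ + ν / W - 2 * (M : ℝ)) := by
        have e1 : (M:ℝ)*W*(1-a) ≤ (M:ℝ)*W*μ :=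
          mul_le_mul_of_nonneg_left (by linarith) hMW0
        have e2 : (M:ℝ)*W*(1-b) ≤ (M:ℝ)*W*σ :=
          mul_le_mul_of_nonneg_left (by linarith) hMW0
        have e3 : (2*(M:ℝ)+1)*W*(1-c) ≤ (2*(M:ℝ)+1)*W*θ :=
          mul_le_mul_of_nonneg_left (by linarith) (by positivity)
        have f1 : (M:ℝ)*W*a ≤ (2*(M:ℝ)+1)*W*a :=
          mul_le_mul_of_nonneg_right
            (mul_le_mul_of_nonneg_right (by linarith : (M:ℝ) ≤ 2*(M:ℝ)+1) hW.le) ha0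
        have f2 : (M:ℝ)*W*b ≤ (2*(M:ℝ)+1)*W*b :=
          mul_le_mul_of_nonneg_right
            (mul_le_mul_of_nonneg_right (by linarith : (M:ℝ) ≤ 2*(M:ℝ)+1) hW.le) hb0
        have f3 : d ≤ d * ((2*(M:ℝ)+1)*W) := le_mul_of_one_le_right hd0 hMW
        have f4 : (2*(M:ℝ)+1)*W*(a+b+c+d) ≤ (2*(M:ℝ)+1)*W*r :=
          mul_le_mul_of_nonneg_left hbud (by positivity)
        have htW' : W * (ν / W) = ν := by rw [mul_comm]; exact htW
        linarith [e1, e2, e3, f1, f2, f3, f4, htW']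
      rw [hy]
      exact (mul_le_mul_iff_right₀ hW).mp key
  · intro r hr1 hr2
    constructor
    · refine ⟨1, 1, 0, W*αS - (r-1), by norm_num, by norm_num, le_refl 0, by linarith,
        by norm_num, by norm_num, ?_, ?_⟩
      · have h1 : max (1-(1:ℝ)) 0 = 0 := by norm_num
        have h3 : max (1-(0:ℝ)) 0 = 1 := by norm_num
        have h4 : max (W*αS - (W*αS - (r-1))) 0 = r - 1 := by
          rw [max_eq_left (by linarith)]; ring
        rw [h1, h3, h4]; linarith
      · field_simp; ring
    · rintro y ⟨μ, σ, θ, ν, hμ, hσ, hθ, hν, hμθ, hσθ, hbud, hy⟩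
      set a := max (1-μ) 0 with ha
      set b := max (1-σ) 0 with hb
      set c := max (1-θ) 0 with hc
      set d := max (W*αS - ν) 0 with hd
      have ha1 : 1 - μ ≤ a := le_max_left _ _
      have ha0 : 0 ≤ a := le_max_right _ _
      have hb1 : 1 - σ ≤ b := le_max_left _ _
      have hb0 : 0 ≤ b := le_max_right _ _
      have hc1 : 1 - θ ≤ c := le_max_left _ _
      have hc0 : 0 ≤ c := le_max_right _ _
      have hd1 : W*αS - ν ≤ d := le_max_left _ _
      have hd0 : 0 ≤ d := le_max_right _ _
      have htW : ν / W * W = ν := div_mul_cancel₀ ν hW'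
      have hrW : (1 - r) / W * W = 1 - r := div_mul_cancel₀ _ hW'
      set p := min a θ with hp
      set q := min b θ with hq
      have hpa : p ≤ a := min_le_left _ _
      have hpθ : p ≤ θ := min_le_right _ _
      have hp0 : 0 ≤ p := le_min ha0 hθ
      have hqb : q ≤ b := min_le_left _ _
      have hqθ : q ≤ θ := min_le_right _ _
      have hq0 : 0 ≤ q := le_min hb0 hθ
      have hμp : 1 - p ≤ μ := by
        rcases min_cases a θ with ⟨h, _⟩ | ⟨h, _⟩
        · rw [hp, h]; linarith
        · rw [hp, h]; linarith
      have hσq : 1 - q ≤ σ := by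
        rcases min_cases b θ with ⟨h, _⟩ | ⟨h, _⟩
        · rw [hq, h]; linarith
        · rw [hq, h]; linarith
      have key : W * (αS + (1 - r) / W) ≤
          W * ((M : ℝ) * μ + (M : ℝ) * σ + (2 * (M : ℝ) + 1) * θ + ν / W - 2 * (M : ℝ)) := by
        have hMW0 : (0:ℝ) ≤ (M:ℝ)*W := by positivity
        have e1 : (M:ℝ)*W*(1-p) ≤ (M:ℝ)*W*μ :=
          mul_le_mul_of_nonneg_left hμp hMW0
        have e2 : (M:ℝ)*W*(1-q) ≤ (M:ℝ)*W*σ :=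
          mul_le_mul_of_nonneg_left hσq hMW0
        have htW' : W * (ν / W) = ν := by rw [mul_comm]; exact htW
        have hrW' : W * ((1-r) / W) = 1 - r := by rw [mul_comm]; exact hrW
        rcases le_total ((M:ℝ) * W) 1 with hcase | hcase
        · have g1 : (M:ℝ)*W*p ≤ p := mul_le_of_le_one_left hp0 hcase
          have g2 : (M:ℝ)*W*q ≤ q := mul_le_of_le_one_left hq0 hcase
          have g3 : θ ≤ θ * ((2*(M:ℝ)+1)*W) := le_mul_of_one_le_right hθ hMW
          linarith [e1, e2, g1, g2, g3, htW', hrW']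
        · have g1 : ((M:ℝ)*W-1)*p ≤ ((M:ℝ)*W-1)*θ :=
            mul_le_mul_of_nonneg_left hpθ (by linarith)
          have g2 : ((M:ℝ)*W-1)*q ≤ ((M:ℝ)*W-1)*θ :=
            mul_le_mul_of_nonneg_left hqθ (by linarith)
          have g3 : (0:ℝ) ≤ W * θ := mul_nonneg hW.le hθ
          linarith [e1, e2, g1, g2, g3, htW', hrW']
      rw [hy]
      exact (mul_le_mul_iff_right₀ hW).mp key
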